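/- Let (r_n)_{n≥1} be a sequence of k×k matrices with strictly positive integer entries. Suppose there exist nonnegative reals Λ_1,…,Λ_k and a subsequence n_p → ∞ such that for all i,l ∈ {1,…,k}, r_{n_p}^{i,l} / (Σ_{j=1}^k r_{n_p}^{j,l}) → Λ_i as p → ∞. Then the intersections of the cones r_{n_p}(ℝ₊^k) with the simplex Δ = {z ∈ ℝ₊^k : z_1+⋯+z_k = 1} converge in Hausdorff distance to the single point (Λ_1,…,Λ_k). -/

import Mathlib

open Filter Topology

/-- Proposition 4.3 (geometric core): if the normalized columns of the positive
integer matrices `r_{n_p}` converge to `(Λ_1,…,Λ_k)`, then the intersections of the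
cones `r_{n_p}(ℝ₊^k)` with the unit simplex converge in Hausdorff distance to the
single point `(Λ_1,…,Λ_k)`. -/
theorem stmt8 (k : ℕ) (hk : 0 < k) (r : ℕ → Matrix (Fin k) (Fin k) ℝ)
    (hint : ∀ n i l, ∃ z : ℕ, 0 < z ∧ r n i l = z)
    (Λ : Fin k → ℝ) (hΛ : ∀ i, 0 ≤ Λ i)
    (np : ℕ → ℕ) (hnp : StrictMono np)
    (hconv : ∀ i l, Tendsto (fun p => r (np p) i l / ∑ j, r (np p) j l) atTop (𝓝 (Λ i))) :
    Tendsto (fun p => Metric.hausdorffDist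
      {z : Fin k → ℝ | (∃ v : Fin k → ℝ, (∀ i, 0 ≤ v i) ∧ z = (r (np p)).mulVec v) ∧
        (∀ i, 0 ≤ z i) ∧ ∑ i, z i = 1}
      {Λ}) atTop (𝓝 0) := by
  have l0 : Fin k := ⟨0, hk⟩
  have hpos : ∀ n i l, 0 < r n i l := by
    intro n i l; obtain ⟨z, hz, he⟩ := hint n i l; rw [he]; exact_mod_cast hz
  have hs : ∀ n l, 0 < ∑ j, r n j l := fun n l =>
    Finset.sum_pos (fun j _ => hpos n j l) ⟨l0, Finset.mem_univ _⟩
  set c : ℕ → Fin k → (Fin k → ℝ) := fun p l i => r (np p) i l / ∑ j, r (np p) j l with hc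
  have hmem : ∀ p l, ((∃ v : Fin k → ℝ, (∀ i, 0 ≤ v i) ∧ c p l = (r (np p)).mulVec v) ∧
      (∀ i, 0 ≤ c p l i) ∧ ∑ i, c p l i = 1) := by
    intro p l
    have hsl := hs (np p) l
    refine ⟨⟨fun j => if j = l then (∑ j, r (np p) j l)⁻¹ else 0, ?_, ?_⟩, ?_, ?_⟩
    · intro i; by_cases h : i = l <;> simp [h, inv_nonneg.mpr hsl.le]
    · funext i
      simp [Matrix.mulVec, dotProduct, Finset.sum_ite_eq', div_eq_mul_inv, hc]
    · intro i; have := hpos (np p) i l; positivity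
    · simp only [hc]
      rw [← Finset.sum_div, div_self hsl.ne']
  set g : ℕ → ℝ := fun p => ∑ l, dist (c p l) Λ with hg
  have hg0 : ∀ p, 0 ≤ g p := fun p => Finset.sum_nonneg fun l _ => dist_nonneg
  have hterm : ∀ p l, dist (c p l) Λ ≤ g p := fun p l =>
    Finset.single_le_sum (fun j _ => dist_nonneg) (Finset.mem_univ l)
  apply squeeze_zero (fun p => Metric.hausdorffDist_nonneg)
  · intro p
    apply Metric.hausdorffDist_le_of_mem_dist (hg0 p)
    · rintro z ⟨⟨v, hv, hzv⟩, hz0, hz1⟩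
      refine ⟨Λ, rfl, ?_⟩
      rw [dist_pi_le_iff (hg0 p)]
      intro i
      have hsum_t : ∑ l, v l * (∑ j, r (np p) j l) = 1 := by
        rw [← hz1]
        simp only [hzv, Matrix.mulVec, dotProduct]
        rw [Finset.sum_comm]
        exact Finset.sum_congr rfl fun l _ => by
          rw [Finset.mul_sum]; exact Finset.sum_congr rfl fun i _ => by ring
      have ht0 : ∀ l, 0 ≤ v l * (∑ j, r (np p) j l) := fun l =>
        mul_nonneg (hv l) (hs (np p) l).le
      have ht1 : ∀ l, v l * (∑ j, r (np p) j l) ≤ 1 := fun l => by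
        rw [← hsum_t]
        exact Finset.single_le_sum (fun j _ => ht0 j) (Finset.mem_univ l)
      have hzi : z i = ∑ l, (v l * (∑ j, r (np p) j l)) * c p l i := by
        rw [hzv]
        simp only [Matrix.mulVec, dotProduct, hc]
        exact Finset.sum_congr rfl fun l _ => by
          field_simp [(hs (np p) l).ne']
      have key : (∑ l, (v l * (∑ j, r (np p) j l)) * c p l i) - Λ i
          = ∑ l, (v l * (∑ j, r (np p) j l)) * (c p l i - Λ i) := by
        simp only [mul_sub]
        rw [Finset.sum_sub_distrib, ← Finset.sum_mul, hsum_t, one_mul]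
      rw [Real.dist_eq, hzi, key]
      calc |∑ l, (v l * (∑ j, r (np p) j l)) * (c p l i - Λ i)|
          ≤ ∑ l, |(v l * (∑ j, r (np p) j l)) * (c p l i - Λ i)| :=
            Finset.abs_sum_le_sum_abs _ _
        _ ≤ ∑ l, dist (c p l) Λ := by
            refine Finset.sum_le_sum fun l _ => ?_
            rw [abs_mul, abs_of_nonneg (ht0 l)]
            calc (v l * (∑ j, r (np p) j l)) * |c p l i - Λ i|
                ≤ 1 * |c p l i - Λ i| :=
                  mul_le_mul_of_nonneg_right (ht1 l) (abs_nonneg _)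
              _ = dist (c p l i) (Λ i) := by rw [one_mul, Real.dist_eq]
              _ ≤ dist (c p l) Λ := dist_le_pi_dist _ _ i
    · rintro x rfl
      exact ⟨c p l0, hmem p l0, by rw [dist_comm]; exact hterm p l0⟩
  · have hcl : ∀ l, Tendsto (fun p => c p l) atTop (𝓝 Λ) := by
      intro l
      rw [tendsto_pi_nhds]
      intro i
      exact hconv i l
    have : Tendsto g atTop (𝓝 (∑ l : Fin k, (0:ℝ))) := by
      apply tendsto_finset_sum
      intro l _
      have := (hcl l).dist (tendsto_const_nhds (x := Λ))
      simpa using this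
    simpa using this
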